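/- The two-dimensional subspace V = {a ∑_{i=1}^{ℓ} w_i + b r : a, b ∈ ℂ} contains both r and s and is invariant under the Grover operator: U(V) = V. -/

import Mathlib

open scoped BigOperators
noncomputable section

local notation "⟪" x ", " y "⟫" => @inner ℂ _ _ x y

/-- the two-dimensional subspace `V = {a ∑ w_i + b r}` contains `r` and `s`
and is invariant under the Grover operator: `U(V) = V`. -/
theorem two_dimensional_invariant_subspace_for_grover_operator
    (N ℓ : ℕ) (hN : 2 ≤ N) (hℓ1 : 1 ≤ ℓ) (hℓN : ℓ < N)
    (w : Fin N → EuclideanSpace ℂ (Fin N)) (hw : Orthonormal ℂ w)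
    (s : EuclideanSpace ℂ (Fin N))
    (hs : s = ((Real.sqrt N : ℂ))⁻¹ • ∑ j : Fin N, w j)
    (IL : EuclideanSpace ℂ (Fin N) →L[ℂ] EuclideanSpace ℂ (Fin N))
    (hIL : ∀ u, IL u = u - (2 : ℂ) •
      ∑ j ∈ Finset.univ.filter (fun j : Fin N => (j : ℕ) < ℓ), ⟪w j, u⟫ • w j)
    (Is : EuclideanSpace ℂ (Fin N) →L[ℂ] EuclideanSpace ℂ (Fin N))
    (hIs : ∀ u, Is u = u - (2 : ℂ) • ⟪s, u⟫ • s)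
    (U : EuclideanSpace ℂ (Fin N) →L[ℂ] EuclideanSpace ℂ (Fin N))
    (hU : ∀ u, U u = -Is (IL u))
    (r : EuclideanSpace ℂ (Fin N))
    (hr : r = ((Real.sqrt (1 - (ℓ : ℝ) / N) : ℂ))⁻¹ •
      (s - ((Real.sqrt N : ℂ))⁻¹ •
        ∑ j ∈ Finset.univ.filter (fun j : Fin N => (j : ℕ) < ℓ), w j))
    (wsum : EuclideanSpace ℂ (Fin N))
    (hwsum : wsum = ∑ j ∈ Finset.univ.filter (fun j : Fin N => (j : ℕ) < ℓ), w j)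
    (V : Submodule ℂ (EuclideanSpace ℂ (Fin N)))
    (hV : V = Submodule.span ℂ {wsum, r}) :
    r ∈ V ∧ s ∈ V ∧
    Submodule.map (U : EuclideanSpace ℂ (Fin N) →ₗ[ℂ] EuclideanSpace ℂ (Fin N)) V = V := by
  have hortho : ∀ i j, ⟪w i, w j⟫ = if i = j then (1:ℂ) else 0 := orthonormal_iff_ite.mp hw
  set S := Finset.univ.filter (fun j : Fin N => (j : ℕ) < ℓ) with hS
  have hNpos : (0:ℝ) < (N:ℝ) := by positivity
  have hsqrtN : ((Real.sqrt N : ℝ) : ℂ) ≠ 0 := by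
    simp only [ne_eq, Complex.ofReal_eq_zero]
    exact ne_of_gt (Real.sqrt_pos.mpr hNpos)
  have hcpos : (0:ℝ) < 1 - (ℓ : ℝ) / N := by
    have : (ℓ : ℝ) / N < 1 := (div_lt_one hNpos).mpr (by exact_mod_cast hℓN)
    linarith
  have hc : ((Real.sqrt (1 - (ℓ : ℝ) / N) : ℝ) : ℂ) ≠ 0 := by
    simp only [ne_eq, Complex.ofReal_eq_zero]
    exact ne_of_gt (Real.sqrt_pos.mpr hcpos)
  -- inner products
  have hws : ∀ j : Fin N, ⟪w j, s⟫ = ((Real.sqrt N : ℝ) : ℂ)⁻¹ := by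
    intro j
    rw [hs, inner_smul_right, inner_sum]
    simp [hortho]
  have hwwsum : ∀ j ∈ S, ⟪w j, wsum⟫ = 1 := by
    intro j hj
    rw [hwsum, inner_sum]
    simp only [hortho]
    rw [Finset.sum_ite_eq S j (fun _ => (1:ℂ))]
    simp [hj]
  have hss : ⟪s, s⟫ = 1 := by
    rw [hs, inner_smul_left, inner_smul_right, inner_sum]
    simp only [sum_inner, hortho]
    rw [Finset.sum_comm]
    simp only [Finset.sum_ite_eq Finset.univ, Finset.mem_univ, if_true]
    rw [Finset.sum_const, Finset.card_univ, Fintype.card_fin]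
    rw [map_inv₀, Complex.conj_ofReal]
    rw [nsmul_eq_mul]
    rw [← mul_assoc, ← mul_inv]
    rw [← Complex.ofReal_mul, Real.mul_self_sqrt hNpos.le]
    have hN0 : ((N:ℝ):ℂ) ≠ 0 := by exact_mod_cast hNpos.ne'
    field_simp
    exact (Complex.ofReal_natCast N).symm
  -- IL on basic vectors
  have hILwsum : IL wsum = -wsum := by
    rw [hIL]
    have : ∑ j ∈ S, ⟪w j, wsum⟫ • w j = wsum := by
      calc ∑ j ∈ S, ⟪w j, wsum⟫ • w j = ∑ j ∈ S, w j :=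
            Finset.sum_congr rfl (fun j hj => by rw [hwwsum j hj, one_smul])
        _ = wsum := hwsum.symm
    rw [this]
    module
  have hILs : IL s = s - ((2:ℂ) * ((Real.sqrt N : ℝ) : ℂ)⁻¹) • wsum := by
    rw [hIL]
    have : ∑ j ∈ S, ⟪w j, s⟫ • w j = ((Real.sqrt N : ℝ) : ℂ)⁻¹ • wsum := by
      rw [hwsum, Finset.smul_sum]
      exact Finset.sum_congr rfl (fun j hj => by rw [hws j])
    rw [this]
    module
  have hILr : IL r = r := by
    rw [hr, ← hwsum, map_smul, map_sub, map_smul, hILs, hILwsum]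
    module
  -- involutions
  have hIsIs : ∀ u, Is (Is u) = u := by
    intro u
    rw [hIs (Is u), hIs u]
    rw [inner_sub_right, inner_smul_right, inner_smul_right, hss, mul_one]
    module
  have hILIL : ∀ u, IL (IL u) = u := by
    intro u
    rw [hIL (IL u)]
    have key : ∑ j ∈ S, ⟪w j, IL u⟫ • w j = -∑ j ∈ S, ⟪w j, u⟫ • w j := by
      rw [← Finset.sum_neg_distrib]
      refine Finset.sum_congr rfl (fun j hj => ?_)
      rw [hIL u, inner_sub_right, inner_smul_right, inner_sum]
      have : ∑ k ∈ S, ⟪w j, ⟪w k, u⟫ • w k⟫ = ⟪w j, u⟫ := by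
        have : ∀ k ∈ S, ⟪w j, ⟪w k, u⟫ • w k⟫ = if j = k then ⟪w k, u⟫ else 0 := by
          intro k hk
          rw [inner_smul_right, hortho]
          split <;> simp
        rw [Finset.sum_congr rfl this, Finset.sum_ite_eq S j (fun k => ⟪w k, u⟫)]
        simp [hj]
      rw [this]
      ring_nf
      module
    rw [key, hIL u]
    module
  have hUinj : Function.Injective U := by
    intro a b hab
    have h1 : Is (IL a) = Is (IL b) := by
      have := hU a; have h2 := hU b
      rw [this, h2] at hab
      exact neg_injective hab
    have h2 : IL a = IL b := by
      have := congrArg Is h1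
      rwa [hIsIs, hIsIs] at this
    have := congrArg IL h2
    rwa [hILIL, hILIL] at this
  -- membership facts
  have hrV : r ∈ V := by
    rw [hV]; exact Submodule.subset_span (by simp)
  have hwsumV : wsum ∈ V := by
    rw [hV]; exact Submodule.subset_span (by simp)
  have hsr : s = ((Real.sqrt (1 - (ℓ : ℝ) / N) : ℝ) : ℂ) • r
      + ((Real.sqrt N : ℝ) : ℂ)⁻¹ • wsum := by
    rw [hr, ← hwsum, smul_smul, mul_inv_cancel₀ hc, one_smul]
    module
  have hsV : s ∈ V := by
    rw [hsr]
    exact V.add_mem (V.smul_mem _ hrV) (V.smul_mem _ hwsumV)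
  refine ⟨hrV, hsV, ?_⟩
  -- images in V
  have hUwsum : U wsum ∈ V := by
    rw [hU, hILwsum, map_neg, neg_neg, hIs]
    exact V.sub_mem hwsumV (V.smul_mem _ (V.smul_mem _ hsV))
  have hUr : U r ∈ V := by
    rw [hU, hILr, hIs, neg_sub]
    exact V.sub_mem (V.smul_mem _ (V.smul_mem _ hsV)) hrV
  have hmaple : Submodule.map (U : EuclideanSpace ℂ (Fin N) →ₗ[ℂ] EuclideanSpace ℂ (Fin N)) V ≤ V := by
    rw [hV, Submodule.map_span, ← hV]
    refine Submodule.span_le.mpr ?_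
    rintro x ⟨y, hy, rfl⟩
    rcases hy with rfl | rfl
    · exact hUwsum
    · exact hUr
  have hinj' : Function.Injective
      (U : EuclideanSpace ℂ (Fin N) →ₗ[ℂ] EuclideanSpace ℂ (Fin N)) := hUinj
  have hfr : Module.finrank ℂ V =
      Module.finrank ℂ (Submodule.map (U : EuclideanSpace ℂ (Fin N) →ₗ[ℂ] EuclideanSpace ℂ (Fin N)) V) :=
    (Submodule.equivMapOfInjective _ hinj' V).finrank_eq
  exact Submodule.eq_of_le_of_finrank_le hmaple hfr.le
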